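/- Let A be a bounded operator on a complex Hilbert space and r ≥ 1. Then w(A)^{2r} ≤ sup_{‖x‖=1} ∫₀¹ ‖(t|A|² + (1−t)|A*|²)^{1/2} x‖^{2r} dt ≤ (1/2)‖ |A|^{2r} + |A*|^{2r} ‖. -/

import Mathlib

set_option maxHeartbeats 1000000

open ContinuousLinearMap MeasureTheory

variable {H : Type*} [NormedAddCommGroup H] [InnerProductSpace ℂ H] [CompleteSpace H]

local notation "⟪" x ", " y "⟫" => @inner ℂ _ _ x y

/-- The numerical radius of a bounded operator. -/
noncomputable def numRadius (A : H →L[ℂ] H) : ℝ :=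
  sSup {r : ℝ | ∃ x : H, ‖x‖ = 1 ∧ r = ‖(inner ℂ (A x) x : ℂ)‖}

/-- The absolute value `|A| = (A*A)^(1/2)` of a bounded operator. -/
noncomputable def opAbs (A : H →L[ℂ] H) : H →L[ℂ] H := CFC.sqrt (adjoint A * A)

lemma aux_phi_mono {T U : H →L[ℂ] H} (h : T ≤ U) (x : H) :
    RCLike.re ⟪T x, x⟫ ≤ RCLike.re ⟪U x, x⟫ := by
  have h2 := ((ContinuousLinearMap.nonneg_iff_isPositive (U - T)).1 (sub_nonneg.2 h)).2 x
  simp only [ContinuousLinearMap.reApplyInnerSelf, ContinuousLinearMap.sub_apply,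
    inner_sub_left, map_sub] at h2
  linarith

lemma aux_smul_nonneg {T : H →L[ℂ] H} (hT : 0 ≤ T) {c : ℝ} (hc : 0 ≤ c) :
    0 ≤ c • T := by
  rw [ContinuousLinearMap.nonneg_iff_isPositive] at hT ⊢
  have hc' : c • T = (c : ℂ) • T := (algebraMap_smul ℂ c T).symm
  constructor
  · rw [hc']
    have := hT.isSelfAdjoint
    rw [← ContinuousLinearMap.isSelfAdjoint_iff_isSymmetric]
    unfold IsSelfAdjoint at this ⊢
    rw [star_smul, this, Complex.star_def, Complex.conj_ofReal]
  · intro x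
    have h3 := hT.2 x
    rw [ContinuousLinearMap.reApplyInnerSelf] at h3 ⊢
    rw [hc', ContinuousLinearMap.smul_apply, inner_smul_left, Complex.conj_ofReal,
      RCLike.mul_re]
    have : RCLike.im (c : ℂ) = 0 := by simp
    rw [this, zero_mul, sub_zero]
    have : RCLike.re (c : ℂ) = c := by simp
    rw [this]
    positivity

lemma aux_norm_sqrt_sq {B : H →L[ℂ] H} (hB : 0 ≤ B) (x : H) :
    ‖CFC.sqrt B x‖ ^ 2 = RCLike.re ⟪B x, x⟫ := by
  have hsa : IsSelfAdjoint (CFC.sqrt B) := IsSelfAdjoint.of_nonneg (CFC.sqrt_nonneg B)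
  have hmul : CFC.sqrt B * CFC.sqrt B = B := CFC.sqrt_mul_sqrt_self B hB
  have hsymm := (ContinuousLinearMap.isSelfAdjoint_iff_isSymmetric).mp hsa
  have key : ⟪B x, x⟫ = ⟪CFC.sqrt B x, CFC.sqrt B x⟫ := by
    conv_lhs => rw [← hmul, ContinuousLinearMap.mul_apply]
    exact hsymm (CFC.sqrt B x) x
  rw [key, inner_self_eq_norm_sq]

lemma aux_phi_mul (A : H →L[ℂ] H) (x : H) :
    RCLike.re ⟪(ContinuousLinearMap.adjoint A * A) x, x⟫ = ‖A x‖ ^ 2 := by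
  rw [ContinuousLinearMap.mul_apply,
    ContinuousLinearMap.adjoint_inner_left, inner_self_eq_norm_sq]

lemma aux_young {s ε rr : ℝ} (hs : 0 ≤ s) (hε : 0 < ε) (hr : 1 < rr) :
    s ≤ (1/rr) * (ε ^ (1 - rr) * s ^ rr) + (1 - 1/rr) * ε := by
  have hrr0 : (0:ℝ) < rr := by linarith
  have hw2 : (0:ℝ) ≤ 1 - 1/rr := by
    have : 1/rr ≤ 1 := by rw [div_le_one hrr0]; linarith
    linarith
  have h := Real.geom_mean_le_arith_mean2_weighted (w₁ := 1/rr) (w₂ := 1 - 1/rr)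
    (p₁ := ε ^ (1-rr) * s ^ rr) (p₂ := ε) (by positivity) hw2 (by positivity) hε.le
    (by ring)
  have hrne : rr ≠ 0 := ne_of_gt hrr0
  have hgm : (ε ^ (1-rr) * s ^ rr) ^ (1/rr) * ε ^ (1 - 1/rr) = s := by
    rw [Real.mul_rpow (by positivity) (by positivity), ← Real.rpow_mul hε.le,
      ← Real.rpow_mul hs]
    rw [mul_comm (ε ^ ((1-rr) * (1/rr))), mul_assoc, ← Real.rpow_add hε]
    have e1 : (1-rr) * (1/rr) + (1 - 1/rr) = 0 := by field_simp; ring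
    have e2 : rr * (1/rr) = 1 := by field_simp
    rw [e1, e2, Real.rpow_one, Real.rpow_zero, mul_one]
  rw [hgm] at h
  linarith

lemma aux_mccarthy {B : H →L[ℂ] H} (hB : 0 ≤ B) {x : H} (hx : ‖x‖ = 1)
    {rr : ℝ} (hr : 1 ≤ rr) :
    (RCLike.re ⟪B x, x⟫) ^ rr ≤ RCLike.re ⟪cfc (fun s : ℝ => s ^ rr) B x, x⟫ := by
  have hBsa : IsSelfAdjoint B := IsSelfAdjoint.of_nonneg hB
  have hspec : ∀ s ∈ spectrum ℝ B, 0 ≤ s := fun s hs => spectrum_nonneg_of_nonneg hB hs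
  have hrr0 : (0:ℝ) < rr := by linarith
  have hcont : ContinuousOn (fun s : ℝ => s ^ rr) (spectrum ℝ B) := fun s _ =>
    (Real.continuousAt_rpow_const s rr (Or.inr hrr0.le)).continuousWithinAt
  have hφB : 0 ≤ RCLike.re ⟪B x, x⟫ :=
    ((ContinuousLinearMap.nonneg_iff_isPositive B).1 hB).2 x
  set R := cfc (fun s : ℝ => s ^ rr) B with hRdef
  clear_value R
  have hR : 0 ≤ R := hRdef ▸ cfc_nonneg (fun s hs => Real.rpow_nonneg (hspec s hs) rr)
  have hm : 0 ≤ RCLike.re ⟪R x, x⟫ :=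
    ((ContinuousLinearMap.nonneg_iff_isPositive R).1 hR).2 x
  rcases eq_or_lt_of_le hr with hr1 | hr1
  · subst hr1
    have hfun : (fun s : ℝ => s ^ (1:ℝ)) = fun s : ℝ => s := by
      funext s; rw [Real.rpow_one]
    rw [hRdef, hfun, cfc_id' ℝ B, Real.rpow_one]
  · -- 1 < rr
    set φB := RCLike.re ⟪B x, x⟫
    set m := RCLike.re ⟪R x, x⟫
    have hx2 : RCLike.re ⟪x, x⟫ = 1 := by rw [inner_self_eq_norm_sq, hx, one_pow]
    have key : ∀ ε : ℝ, 0 < ε → φB ≤ (1/rr) * (ε ^ (1-rr) * m) + (1 - 1/rr) * ε := by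
      intro ε hε
      set c : ℝ := (1/rr) * ε ^ (1-rr) with hc
      set d : ℝ := (1 - 1/rr) * ε with hd
      have hop : B ≤ c • R + d • 1 := by
        have h1 : B = cfc (fun s : ℝ => s) B := (cfc_id' ℝ B).symm
        have h2 : cfc (fun s : ℝ => c * s ^ rr + d) B = c • R + d • 1 := by
          rw [hRdef, cfc_add (a := B) (fun s : ℝ => c * s ^ rr) (fun _ => d)
              (continuousOn_const.mul hcont) continuousOn_const,
            cfc_const_mul c (fun s : ℝ => s ^ rr) B hcont, cfc_const d B,
            Algebra.algebraMap_eq_smul_one]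
        rw [← h2]
        conv_lhs => rw [h1]
        apply cfc_mono
        · intro s hs
          have := aux_young (hspec s hs) hε hr1
          rw [hc, hd]; linarith [this]
        · exact continuousOn_id
        · exact (continuousOn_const.mul hcont).add continuousOn_const
      have := aux_phi_mono hop x
      have hexp : RCLike.re ⟪(c • R + d • 1) x, x⟫ = c * m + d := by
        rw [ContinuousLinearMap.add_apply, inner_add_left, map_add]
        have e1 : RCLike.re ⟪(c • R) x, x⟫ = c * m := by
          rw [show c • R = (c:ℂ) • R from (algebraMap_smul ℂ c R).symm,
            ContinuousLinearMap.smul_apply, inner_smul_left, Complex.conj_ofReal,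
            RCLike.mul_re]
          simp [m]
        have e2 : RCLike.re ⟪(d • (1:H →L[ℂ] H)) x, x⟫ = d := by
          rw [show d • (1:H →L[ℂ] H) = (d:ℂ) • (1:H →L[ℂ] H) from
            (algebraMap_smul ℂ d (1:H →L[ℂ] H)).symm,
            ContinuousLinearMap.smul_apply, inner_smul_left, Complex.conj_ofReal,
            RCLike.mul_re, ContinuousLinearMap.one_apply]
          simp [hx2, hx]
        rw [e1, e2]
      rw [hexp] at this
      rw [hc, hd] at this
      linarith [this]
    rcases eq_or_lt_of_le hm with hm0 | hm0
    · -- m = 0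
      have hφ0 : φB ≤ 0 := by
        by_contra hcon
        push_neg at hcon
        have hε : 0 < φB * rr / (2 * (rr - 1)) := by
          apply div_pos (by positivity) (by linarith)
        have := key _ hε
        rw [← hm0, mul_zero, mul_zero, zero_add] at this
        have heq : (1 - 1/rr) * (φB * rr / (2 * (rr - 1))) = φB / 2 := by
          have h1 : rr - 1 ≠ 0 := by intro h; rw [sub_eq_zero] at h; exact (ne_of_gt hr1) h
          field_simp
        rw [heq] at this
        linarith
      have : φB = 0 := le_antisymm hφ0 hφB
      rw [this, Real.zero_rpow (ne_of_gt hrr0), ← hm0]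
    · -- 0 < m
      have hεm : (0:ℝ) < m ^ (1/rr) := Real.rpow_pos_of_pos hm0 _
      have := key _ hεm
      have hcalc : (1/rr) * ((m ^ (1/rr)) ^ (1-rr) * m) + (1 - 1/rr) * m ^ (1/rr)
          = m ^ (1/rr) := by
        rw [← Real.rpow_mul hm0.le]
        nth_rewrite 2 [show m = m ^ (1:ℝ) by rw [Real.rpow_one]]
        rw [← Real.rpow_add hm0]
        have e1 : 1/rr * (1-rr) + 1 = 1/rr := by field_simp; ring
        rw [e1]
        ring
      rw [hcalc] at this
      calc φB ^ rr ≤ (m ^ (1/rr)) ^ rr :=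
            Real.rpow_le_rpow hφB this hrr0.le
        _ = m := by
            rw [← Real.rpow_mul hm0.le, one_div, inv_mul_cancel₀ (ne_of_gt hrr0),
              Real.rpow_one]

lemma aux_phi_smul (c : ℝ) (T : H →L[ℂ] H) (x : H) :
    RCLike.re ⟪(c • T) x, x⟫ = c * RCLike.re ⟪T x, x⟫ := by
  rw [show c • T = (c:ℂ) • T from (algebraMap_smul ℂ c T).symm,
    ContinuousLinearMap.smul_apply, inner_smul_left, Complex.conj_ofReal, RCLike.mul_re]
  simp

lemma aux_perx (A : H →L[ℂ] H) {r : ℝ} (hr : 1 ≤ r) {x : H} (hx : ‖x‖ = 1) :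
    ‖(inner ℂ (A x) x : ℂ)‖ ^ (2*r) ≤ (∫ t in (0:ℝ)..1,
        ‖CFC.sqrt (t • (adjoint A * A) + (1 - t) • (A * adjoint A)) x‖ ^ (2 * r)) ∧
    (∫ t in (0:ℝ)..1,
        ‖CFC.sqrt (t • (adjoint A * A) + (1 - t) • (A * adjoint A)) x‖ ^ (2 * r)) ≤
      (1 / 2 : ℝ) *
        ‖cfc (fun s : ℝ => s ^ r) (adjoint A * A) + cfc (fun s : ℝ => s ^ r) (A * adjoint A)‖ := by
  have hr0 : (0:ℝ) < r := by linarith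
  have hS0 : 0 ≤ ContinuousLinearMap.adjoint A * A := by
    rw [← ContinuousLinearMap.star_eq_adjoint]; exact star_mul_self_nonneg A
  have hT0 : 0 ≤ A * ContinuousLinearMap.adjoint A := by
    rw [← ContinuousLinearMap.star_eq_adjoint]; exact mul_star_self_nonneg A
  set a : ℝ := ‖A x‖ ^ 2 with ha
  set b : ℝ := ‖ContinuousLinearMap.adjoint A x‖ ^ 2 with hb
  have ha0 : 0 ≤ a := by positivity
  have hb0 : 0 ≤ b := by positivity
  have haφ : RCLike.re ⟪(ContinuousLinearMap.adjoint A * A) x, x⟫ = a := aux_phi_mul A x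
  have hbφ : RCLike.re ⟪(A * ContinuousLinearMap.adjoint A) x, x⟫ = b := by
    have h := aux_phi_mul (ContinuousLinearMap.adjoint A) x
    rw [ContinuousLinearMap.adjoint_adjoint] at h
    exact h
  -- positivity of B t and value of quadratic form
  have hBt : ∀ t ∈ Set.Icc (0:ℝ) 1, 0 ≤ t • (ContinuousLinearMap.adjoint A * A)
      + (1 - t) • (A * ContinuousLinearMap.adjoint A) := by
    intro t ht
    have h1 := aux_smul_nonneg hS0 ht.1
    have h2 := aux_smul_nonneg hT0 (by linarith [ht.2] : (0:ℝ) ≤ 1 - t)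
    rw [ContinuousLinearMap.nonneg_iff_isPositive] at h1 h2 ⊢
    exact h1.add h2
  have hval : ∀ t : ℝ, RCLike.re ⟪(t • (ContinuousLinearMap.adjoint A * A)
      + (1 - t) • (A * ContinuousLinearMap.adjoint A)) x, x⟫ = t * a + (1-t) * b := by
    intro t
    rw [ContinuousLinearMap.add_apply, inner_add_left, map_add, aux_phi_smul, aux_phi_smul,
      haφ, hbφ]
  have hsq : ∀ y : ℝ, 0 ≤ y → y ^ (2*r) = (y^2 : ℝ) ^ r := by
    intro y hy
    rw [show (2:ℝ)*r = ((2:ℕ):ℝ)*r by norm_num, Real.rpow_mul hy, Real.rpow_natCast]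
  -- the integrand equals (t*a+(1-t)*b)^r on [0,1]
  have hfun : Set.EqOn
      (fun t : ℝ => ‖CFC.sqrt (t • (adjoint A * A) + (1 - t) • (A * adjoint A)) x‖ ^ (2 * r))
      (fun t : ℝ => (t * a + (1-t) * b) ^ r) (Set.uIcc (0:ℝ) 1) := by
    intro t ht
    rw [Set.uIcc_of_le (by norm_num : (0:ℝ) ≤ 1)] at ht
    simp only
    rw [hsq _ (norm_nonneg _), aux_norm_sqrt_sq (hBt t ht), hval t]
  rw [intervalIntegral.integral_congr hfun]
  -- continuity and integrability
  have hgcont : Continuous fun t : ℝ => t * a + (1-t) * b := by fun_prop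
  have hF : Continuous fun t : ℝ => (t * a + (1-t) * b) ^ r := by
    apply continuous_iff_continuousAt.mpr
    intro t
    exact (Real.continuousAt_rpow_const _ r (Or.inr hr0.le)).comp hgcont.continuousAt
  have hFint : IntervalIntegrable (fun t : ℝ => (t * a + (1-t) * b) ^ r) volume 0 1 :=
    hF.intervalIntegrable _ _
  constructor
  · -- lower bound
    set c₀ : ℝ := ‖(inner ℂ (A x) x : ℂ)‖ ^ 2 with hc₀
    have hc₀a : c₀ ≤ a := by
      have := norm_inner_le_norm (𝕜 := ℂ) (A x) x
      rw [hx, mul_one] at this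
      rw [hc₀, ha]
      exact pow_le_pow_left₀ (norm_nonneg _) this 2
    have hc₀b : c₀ ≤ b := by
      have hrw : (inner ℂ (A x) x : ℂ) = ⟪x, ContinuousLinearMap.adjoint A x⟫ :=
        (ContinuousLinearMap.adjoint_inner_right A x x).symm
      have := norm_inner_le_norm (𝕜 := ℂ) x (ContinuousLinearMap.adjoint A x)
      rw [hx, one_mul] at this
      rw [hc₀, hb]
      exact pow_le_pow_left₀ (norm_nonneg _) (by rw [hrw]; exact this) 2
    have hc₀0 : 0 ≤ c₀ := by positivity
    rw [hsq _ (norm_nonneg _)]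
    have hmono : ∀ t ∈ Set.Icc (0:ℝ) 1, c₀ ^ r ≤ (t * a + (1-t) * b) ^ r := by
      intro t ht
      apply Real.rpow_le_rpow hc₀0 _ hr0.le
      nlinarith [ht.1, ht.2]
    have e0 : (∫ _ in (0:ℝ)..1, c₀ ^ r) = c₀ ^ r := by
      rw [intervalIntegral.integral_const, sub_zero, one_smul]
    calc c₀ ^ r = ∫ _ in (0:ℝ)..1, c₀ ^ r := e0.symm
      _ ≤ ∫ t in (0:ℝ)..1, (t * a + (1-t) * b) ^ r :=
          intervalIntegral.integral_mono_on (by norm_num)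
            intervalIntegrable_const hFint hmono
  · -- upper bound
    have hconv : ∀ t ∈ Set.Icc (0:ℝ) 1,
        (t * a + (1-t) * b) ^ r ≤ t * a ^ r + (1-t) * b ^ r := by
      intro t ht
      have hsum1 : t + (1 - t) = 1 := by ring
      have ht2 : (0:ℝ) ≤ 1 - t := by linarith [ht.2]
      have := (convexOn_rpow hr).2 (Set.mem_Ici.mpr ha0) (Set.mem_Ici.mpr hb0)
        ht.1 ht2 hsum1
      simpa [smul_eq_mul] using this
    have hlin : (∫ t in (0:ℝ)..1, (t * a ^ r + (1-t) * b ^ r))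
        = (a ^ r + b ^ r) / 2 := by
      have hrw : (fun t : ℝ => t * a ^ r + (1-t) * b ^ r)
          = fun t : ℝ => (a ^ r - b ^ r) * t + b ^ r := by
        funext t; ring
      rw [hrw, intervalIntegral.integral_add
        (Continuous.intervalIntegrable (by fun_prop) _ _)
        (intervalIntegrable_const),
        intervalIntegral.integral_const_mul, integral_id,
        intervalIntegral.integral_const]
      norm_num
      ring
    have hlincont : IntervalIntegrable (fun t : ℝ => t * a ^ r + (1-t) * b ^ r) volume 0 1 :=
      (Continuous.intervalIntegrable (by fun_prop) _ _)
    have step1 : (∫ t in (0:ℝ)..1, (t * a + (1-t) * b) ^ r) ≤ (a ^ r + b ^ r) / 2 := by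
      rw [← hlin]
      exact intervalIntegral.integral_mono_on (by norm_num) hFint hlincont hconv
    -- McCarthy bounds
    have hMa : a ^ r ≤ RCLike.re ⟪cfc (fun s : ℝ => s ^ r) (ContinuousLinearMap.adjoint A * A) x, x⟫ := by
      rw [← haφ]; exact aux_mccarthy hS0 hx hr
    have hMb : b ^ r ≤ RCLike.re ⟪cfc (fun s : ℝ => s ^ r) (A * ContinuousLinearMap.adjoint A) x, x⟫ := by
      rw [← hbφ]; exact aux_mccarthy hT0 hx hr
    set S := cfc (fun s : ℝ => s ^ r) (ContinuousLinearMap.adjoint A * A)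
    set T := cfc (fun s : ℝ => s ^ r) (A * ContinuousLinearMap.adjoint A)
    have hsum : RCLike.re ⟪S x, x⟫ + RCLike.re ⟪T x, x⟫ ≤ ‖S + T‖ := by
      have h1 : RCLike.re ⟪S x, x⟫ + RCLike.re ⟪T x, x⟫ = RCLike.re ⟪(S + T) x, x⟫ := by
        rw [ContinuousLinearMap.add_apply, inner_add_left, map_add]
      rw [h1]
      calc RCLike.re ⟪(S + T) x, x⟫ ≤ ‖(⟪(S + T) x, x⟫ : ℂ)‖ := RCLike.re_le_norm _
        _ ≤ ‖(S + T) x‖ * ‖x‖ := norm_inner_le_norm _ _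
        _ ≤ ‖S + T‖ * ‖x‖ * ‖x‖ := by
            gcongr; exact ContinuousLinearMap.le_opNorm _ _
        _ = ‖S + T‖ := by rw [hx]; ring
    linarith

theorem numRadius_two_rpow (A : H →L[ℂ] H) (r : ℝ) (hr : 1 ≤ r) :
    numRadius A ^ (2 * r) ≤
      sSup {s : ℝ | ∃ x : H, ‖x‖ = 1 ∧ s = ∫ t in (0:ℝ)..1,
        ‖CFC.sqrt (t • (adjoint A * A) + (1 - t) • (A * adjoint A)) x‖ ^ (2 * r)} ∧
    sSup {s : ℝ | ∃ x : H, ‖x‖ = 1 ∧ s = ∫ t in (0:ℝ)..1,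
        ‖CFC.sqrt (t • (adjoint A * A) + (1 - t) • (A * adjoint A)) x‖ ^ (2 * r)} ≤
      (1 / 2 : ℝ) *
        ‖cfc (fun s : ℝ => s ^ r) (adjoint A * A) + cfc (fun s : ℝ => s ^ r) (A * adjoint A)‖ := by
  have h2r0 : (0:ℝ) < 2 * r := by linarith
  set Sset : Set ℝ := {s : ℝ | ∃ x : H, ‖x‖ = 1 ∧ s = ∫ t in (0:ℝ)..1,
        ‖CFC.sqrt (t • (adjoint A * A) + (1 - t) • (A * adjoint A)) x‖ ^ (2 * r)} with hSset
  set K : ℝ := (1 / 2 : ℝ) *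
        ‖cfc (fun s : ℝ => s ^ r) (adjoint A * A) + cfc (fun s : ℝ => s ^ r) (A * adjoint A)‖
    with hK
  have hK0 : 0 ≤ K := by positivity
  have hub : ∀ s ∈ Sset, s ≤ K := by
    rintro s ⟨x, hx, rfl⟩
    exact (aux_perx A hr hx).2
  have part2 : sSup Sset ≤ K := by
    by_cases hne : Sset.Nonempty
    · exact csSup_le hne hub
    · rw [Set.not_nonempty_iff_eq_empty.mp hne, Real.sSup_empty]
      exact hK0
  refine ⟨?_, part2⟩
  by_cases hex : ∃ x : H, ‖x‖ = 1
  · obtain ⟨x₀, hx₀⟩ := hex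
    have hbdd : BddAbove Sset := ⟨K, hub⟩
    have hmem₀ : (∫ t in (0:ℝ)..1,
        ‖CFC.sqrt (t • (adjoint A * A) + (1 - t) • (A * adjoint A)) x₀‖ ^ (2 * r)) ∈ Sset :=
      ⟨x₀, hx₀, rfl⟩
    have hsup0 : 0 ≤ sSup Sset := by
      have h1 := (aux_perx A hr hx₀).1
      have h2 : (0:ℝ) ≤ ‖(inner ℂ (A x₀) x₀ : ℂ)‖ ^ (2*r) := Real.rpow_nonneg (norm_nonneg _) _
      exact le_trans (le_trans h2 h1) (le_csSup hbdd hmem₀)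
    have hWb : ∀ w ∈ {w : ℝ | ∃ x : H, ‖x‖ = 1 ∧ w = ‖(inner ℂ (A x) x : ℂ)‖},
        w ≤ (sSup Sset) ^ (1/(2*r)) := by
      rintro w ⟨x, hx, rfl⟩
      have h1 : ‖(inner ℂ (A x) x : ℂ)‖ ^ (2*r) ≤ sSup Sset :=
        le_trans (aux_perx A hr hx).1 (le_csSup hbdd ⟨x, hx, rfl⟩)
      calc ‖(inner ℂ (A x) x : ℂ)‖
          = (‖(inner ℂ (A x) x : ℂ)‖ ^ (2*r)) ^ (1/(2*r)) := by
            rw [← Real.rpow_mul (norm_nonneg _), mul_one_div, div_self (ne_of_gt h2r0),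
              Real.rpow_one]
        _ ≤ (sSup Sset) ^ (1/(2*r)) :=
            Real.rpow_le_rpow (Real.rpow_nonneg (norm_nonneg _) _) h1 (by positivity)
    have hWne : {w : ℝ | ∃ x : H, ‖x‖ = 1 ∧ w = ‖(inner ℂ (A x) x : ℂ)‖}.Nonempty :=
      ⟨_, x₀, hx₀, rfl⟩
    have hnr : numRadius A ≤ (sSup Sset) ^ (1/(2*r)) := csSup_le hWne hWb
    have hnr0 : 0 ≤ numRadius A := by
      have hWbdd : BddAbove {w : ℝ | ∃ x : H, ‖x‖ = 1 ∧ w = ‖(inner ℂ (A x) x : ℂ)‖} :=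
        ⟨(sSup Sset) ^ (1/(2*r)), hWb⟩
      have hmemW : ‖(inner ℂ (A x₀) x₀ : ℂ)‖ ∈
          {w : ℝ | ∃ x : H, ‖x‖ = 1 ∧ w = ‖(inner ℂ (A x) x : ℂ)‖} := ⟨x₀, hx₀, rfl⟩
      exact le_trans (norm_nonneg _) (le_csSup hWbdd hmemW)
    calc numRadius A ^ (2*r) ≤ ((sSup Sset) ^ (1/(2*r))) ^ (2*r) :=
          Real.rpow_le_rpow hnr0 hnr h2r0.le
      _ = sSup Sset := by
          rw [← Real.rpow_mul hsup0, one_div, inv_mul_cancel₀ (ne_of_gt h2r0), Real.rpow_one]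
  · have hW : {w : ℝ | ∃ x : H, ‖x‖ = 1 ∧ w = ‖(inner ℂ (A x) x : ℂ)‖} = ∅ := by
      ext w; simp only [Set.mem_setOf_eq, Set.mem_empty_iff_false, iff_false]
      rintro ⟨x, hx, -⟩; exact hex ⟨x, hx⟩
    have hS : Sset = ∅ := by
      ext w; simp only [hSset, Set.mem_setOf_eq, Set.mem_empty_iff_false, iff_false]
      rintro ⟨x, hx, -⟩; exact hex ⟨x, hx⟩
    rw [numRadius, hW, Real.sSup_empty, Real.zero_rpow (ne_of_gt h2r0), hS, Real.sSup_empty]
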